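/- arXiv:1904.06459 — 2 statements merged into one kernel-verified Lean document; each statement's English description precedes it below -/
import Mathlib

section
/- Let f : X → Y be a smooth map of smooth manifolds with constant rank, y ∈ f(X), and suppose f⁻¹({y}) is connected. Define a relation on f⁻¹({y}): x ∼ x′ iff for all open neighborhoods O_x of x and O_{x′} of x′ there exist open sub-neighborhoods U_x ⊆ O_x, U_{x′} ⊆ O_{x′} with f(U_x) = f(U_{x′}). Then ∼ is an equivalence relation, each equivalence class is open in f⁻¹({y}), and hence (by connectedness) there is exactly one equivalence class. -/
open Manifold

set_option maxHeartbeats 1000000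
set_option synthInstance.maxHeartbeats 400000

section ConstantRank

open Set Module

variable {n m r : ℕ}

local notation "E" => EuclideanSpace ℝ (Fin n)
local notation "F" => EuclideanSpace ℝ (Fin m)

lemma euclidean_normal_form
    (g : EuclideanSpace ℝ (Fin n) → EuclideanSpace ℝ (Fin m))
    (s : Set (EuclideanSpace ℝ (Fin n))) (hs : IsOpen s)
    (hg : ContDiffOn ℝ ((⊤ : ℕ∞) : WithTop ℕ∞) g s)
    (hrank : ∀ x ∈ s, Module.finrank ℝ (LinearMap.range (fderiv ℝ g x).toLinearMap) = r)
    (a : EuclideanSpace ℝ (Fin n)) (ha : a ∈ s) :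
    ∃ (W : Set (EuclideanSpace ℝ (Fin n))) (K : Submodule ℝ (EuclideanSpace ℝ (Fin n)))
      (κ : EuclideanSpace ℝ (Fin n) → (Fin r → ℝ) × K)
      (lam : EuclideanSpace ℝ (Fin m) → (Fin r → ℝ)),
      IsOpen W ∧ a ∈ W ∧ W ⊆ s ∧
      (∀ U, IsOpen U → U ⊆ W → IsOpen (κ '' U)) ∧
      ContinuousOn κ W ∧ Set.InjOn κ W ∧
      (∀ x, lam (g x) = (κ x).1) ∧ Set.InjOn lam (g '' W) := by
  have hone : (1 : WithTop ℕ∞) ≤ ((⊤ : ℕ∞) : WithTop ℕ∞) := by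
    exact_mod_cast le_top
  -- the reference derivative and the two orthogonal splittings
  set L : E →L[ℝ] F := fderiv ℝ g a with hL
  set R : Submodule ℝ F := LinearMap.range L.toLinearMap with hR
  set K : Submodule ℝ E := LinearMap.ker L.toLinearMap with hK
  set p : F →L[ℝ] R := Submodule.orthogonalProjectionOnto R with hp
  set q : E →L[ℝ] K := Submodule.orthogonalProjectionOnto K with hq
  set α : E → R × K := fun x => (p (g x), q x) with hα
  set D : E → (E →L[ℝ] R × K) := fun x => ((p.comp (fderiv ℝ g x)).prod q) with hD
  have hdiff : ∀ x ∈ s, DifferentiableAt ℝ g x := fun x hx =>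
    (hg.contDiffAt (hs.mem_nhds hx)).differentiableAt (by simp : ((⊤ : ℕ∞) : WithTop ℕ∞) ≠ 0)
  have hDα : ∀ x ∈ s, HasFDerivAt α (D x) x := by
    intro x hx
    exact HasFDerivAt.prodMk ((p.hasFDerivAt.comp x (hdiff x hx).hasFDerivAt)) q.hasFDerivAt
  -- the derivative at the base point is bijective
  have hinj_a : Function.Bijective (D a) := by
    have hinj : ∀ v : E, p (L v) = 0 → q v = 0 → v = 0 := by
      intro v h1 h2
      have hvK : v ∈ Kᗮ := by
        rw [hq] at h2
        exact Submodule.orthogonalProjectionOnto_eq_zero_iff.mp h2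
      have hLv : L v ∈ R := LinearMap.mem_range_self _ v
      have : (p (L v) : F) = L v := R.starProjection_eq_self_iff.mpr hLv
      rw [h1] at this
      have hLv0 : L v = 0 := by simpa using this.symm
      have hvk : v ∈ K := LinearMap.mem_ker.mpr hLv0
      exact inner_self_eq_zero.mp (hvK v hvk)
    -- injectivity
    have hinjD : Function.Injective (D a) := by
      intro v w hvw
      have h0 : D a (v - w) = 0 := by rw [map_sub, hvw, sub_self]
      have h1 : p (L (v - w)) = 0 ∧ q (v - w) = 0 := by
        have := h0
        rw [hD] at this
        simp only [ContinuousLinearMap.prod_apply, Prod.mk_eq_zero] at this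
        exact ⟨by rw [hL]; exact this.1, this.2⟩
      have := hinj _ h1.1 h1.2
      exact sub_eq_zero.mp this
    have hfr : Module.finrank ℝ E = Module.finrank ℝ (R × K) := by
      rw [Module.finrank_prod, hR, hK]
      exact (LinearMap.finrank_range_add_finrank_ker (L : E →ₗ[ℝ] F)).symm
    exact ⟨hinjD, (LinearMap.injective_iff_surjective_of_finrank_eq_finrank hfr).mp hinjD⟩
  -- upgrade to a continuous linear equiv
  set e₀ : E ≃L[ℝ] ↥R × ↥K :=
    (LinearEquiv.ofBijective ((D a) : E →ₗ[ℝ] ↥R × ↥K) hinj_a).toContinuousLinearEquiv with he₀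
  have he₀coe : (e₀ : E →L[ℝ] ↥R × ↥K) = D a := ContinuousLinearMap.ext fun v => rfl
  -- the set where the derivative of α is invertible is open
  have hfd : ContinuousOn (fderiv ℝ g) s := hg.continuousOn_fderiv_of_isOpen hs hone
  have hcl : Continuous (fun T : E →L[ℝ] F =>
      ((e₀.symm : (↥R × ↥K) →L[ℝ] E)).comp ((p.comp T).prod q)) := by
    have h1 : Continuous (fun T : E →L[ℝ] F => p.comp T) :=
      (ContinuousLinearMap.compL ℝ E F ↥R p).continuous
    have h2 : Continuous (fun S : E →L[ℝ] ↥R => S.prod q) := by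
      have hc := (ContinuousLinearMap.prodₗᵢ ℝ :
        ((E →L[ℝ] ↥R) × (E →L[ℝ] ↥K)) ≃ₗᵢ[ℝ] (E →L[ℝ] ↥R × ↥K)).continuous
      exact hc.comp (continuous_id.prodMk continuous_const)
    have h3 : Continuous (fun S : E →L[ℝ] ↥R × ↥K =>
        ((e₀.symm : (↥R × ↥K) →L[ℝ] E)).comp S) :=
      (ContinuousLinearMap.compL ℝ E (↥R × ↥K) E
        ((e₀.symm : (↥R × ↥K) →L[ℝ] E))).continuous
    exact h3.comp (h2.comp h1)
  set u : E → (E →L[ℝ] E) := fun x => ((e₀.symm : (↥R × ↥K) →L[ℝ] E)).comp (D x) with hu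
  have hucont : ContinuousOn u s := by
    have : u = (fun T : E →L[ℝ] F =>
        ((e₀.symm : (↥R × ↥K) →L[ℝ] E)).comp ((p.comp T).prod q)) ∘ (fderiv ℝ g) := rfl
    rw [this]
    exact hcl.comp_continuousOn hfd
  set s₂ : Set E := s ∩ u ⁻¹' {w : E →L[ℝ] E | IsUnit w} with hs₂def
  have hs₂o : IsOpen s₂ := hucont.isOpen_inter_preimage hs Units.isOpen
  have ha₂ : a ∈ s₂ := by
    refine ⟨ha, ?_⟩
    have h1 : u a = 1 := ContinuousLinearMap.ext fun v => by
      show e₀.symm (D a v) = v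
      rw [← he₀coe]
      exact e₀.symm_apply_apply v
    show IsUnit (u a)
    rw [h1]; exact isUnit_one
  have hbij : ∀ x ∈ s₂, Function.Bijective (D x) := by
    intro x hx
    have hunit : IsUnit (u x) := hx.2
    have hbu : Function.Bijective (u x) := by
      have hmul1 : (↑hunit.unit⁻¹ : E →L[ℝ] E) * u x = 1 := hunit.val_inv_mul
      have hmul2 : u x * (↑hunit.unit⁻¹ : E →L[ℝ] E) = 1 := hunit.mul_val_inv
      refine Function.bijective_iff_has_inverse.mpr
        ⟨(↑hunit.unit⁻¹ : E →L[ℝ] E), fun v => ?_, fun v => ?_⟩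
      · show (↑hunit.unit⁻¹ : E →L[ℝ] E) ((u x) v) = v
        rw [← ContinuousLinearMap.mul_apply, hmul1, ContinuousLinearMap.one_apply]
      · show (u x) ((↑hunit.unit⁻¹ : E →L[ℝ] E) v) = v
        rw [← ContinuousLinearMap.mul_apply, hmul2, ContinuousLinearMap.one_apply]
    have hDeq : ⇑(D x) = ⇑e₀ ∘ ⇑(u x) := by
      funext v
      show D x v = e₀ (e₀.symm (D x v))
      rw [e₀.apply_symm_apply]
    rw [hDeq]
    exact e₀.bijective.comp hbu
  have hequiv : ∀ x ∈ s₂, ∃ e : E ≃L[ℝ] ↥R × ↥K, (e : E →L[ℝ] ↥R × ↥K) = D x := by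
    intro x hx
    exact ⟨(LinearEquiv.ofBijective ((D x) : E →ₗ[ℝ] ↥R × ↥K)
      (hbij x hx)).toContinuousLinearEquiv, ContinuousLinearMap.ext fun v => rfl⟩
  -- inverse function theorem at a
  have hαCD : ContDiffAt ℝ ((⊤ : ℕ∞) : WithTop ℕ∞) α a := by
    have hga : ContDiffAt ℝ ((⊤ : ℕ∞) : WithTop ℕ∞) g a := hg.contDiffAt (hs.mem_nhds ha)
    exact (p.contDiff.comp_contDiffAt a hga).prodMk q.contDiff.contDiffAt
  have hαfd : HasFDerivAt α (e₀ : E →L[ℝ] ↥R × ↥K) a := by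
    rw [he₀coe]; exact hDα a ha
  set Φ : OpenPartialHomeomorph E (↥R × ↥K) := hαCD.toOpenPartialHomeomorph α hαfd (by simp : ((⊤ : ℕ∞) : WithTop ℕ∞) ≠ 0) with hΦ
  have hΦcoe : ⇑Φ = α := ContDiffAt.toOpenPartialHomeomorph_coe hαCD hαfd (by simp : ((⊤ : ℕ∞) : WithTop ℕ∞) ≠ 0)
  have haΦ : a ∈ Φ.source := ContDiffAt.mem_toOpenPartialHomeomorph_source hαCD hαfd (by simp : ((⊤ : ℕ∞) : WithTop ℕ∞) ≠ 0)
  set s₁ : Set (↥R × ↥K) := Φ.target ∩ Φ.symm ⁻¹' (s₂ ∩ Φ.source) with hs₁def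
  have hs₁o : IsOpen s₁ := Φ.isOpen_inter_preimage_symm (hs₂o.inter Φ.open_source)
  have hz₀ : Φ a ∈ s₁ := by
    refine ⟨Φ.map_source haΦ, ?_⟩
    show Φ.symm (Φ a) ∈ s₂ ∩ Φ.source
    rw [Φ.left_inv haΦ]
    exact ⟨ha₂, haΦ⟩
  obtain ⟨ε, hε, hball⟩ := Metric.isOpen_iff.mp hs₁o (Φ a) hz₀
  -- the vertical derivative of g ∘ Φ.symm vanishes on the ball
  have vert : ∀ z ∈ Metric.ball (Φ a) ε,
      HasFDerivAt (fun t : ↥K => g (Φ.symm (z.1, t))) (0 : ↥K →L[ℝ] F) z.2 := by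
    intro z hz
    have hzs₁ : z ∈ s₁ := hball hz
    have hx₂ : Φ.symm z ∈ s₂ := hzs₁.2.1
    have hxsrc : Φ.symm z ∈ Φ.source := hzs₁.2.2
    have hzt : z ∈ Φ.target := hzs₁.1
    obtain ⟨e, he⟩ := hequiv (Φ.symm z) hx₂
    have hΦx : HasFDerivAt Φ (e : E →L[ℝ] ↥R × ↥K) (Φ.symm z) := by
      rw [hΦcoe, he]; exact hDα _ hx₂.1
    have hsymm : HasFDerivAt Φ.symm ((e.symm : (↥R × ↥K) →L[ℝ] E)) z :=
      Φ.hasFDerivAt_symm hzt hΦx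
    set T : (↥R × ↥K) →L[ℝ] F :=
      (fderiv ℝ g (Φ.symm z)).comp (e.symm : (↥R × ↥K) →L[ℝ] E) with hT
    have hgloc : HasFDerivAt (fun w => g (Φ.symm w)) T z :=
      (hdiff _ hx₂.1).hasFDerivAt.comp z hsymm
    have heqt : ∀ w ∈ Φ.target, p (g (Φ.symm w)) = w.1 := by
      intro w hw
      have h := Φ.right_inv hw
      rw [hΦcoe] at h
      exact congrArg Prod.fst h
    have hfst : p.comp T = ContinuousLinearMap.fst ℝ ↥R ↥K := by
      have h1 : HasFDerivAt (fun w : ↥R × ↥K => p (g (Φ.symm w))) (p.comp T) z :=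
        p.hasFDerivAt.comp z hgloc
      have h2 : HasFDerivAt (fun w : ↥R × ↥K => p (g (Φ.symm w)))
          (ContinuousLinearMap.fst ℝ ↥R ↥K) z := by
        apply hasFDerivAt_fst.congr_of_eventuallyEq
        filter_upwards [Φ.open_target.mem_nhds hzt] with w hw
        exact heqt w hw
      exact h1.unique h2
    have hrT : Module.finrank ℝ (LinearMap.range T.toLinearMap) = r := by
      have hre : LinearMap.range T.toLinearMap = LinearMap.range (fderiv ℝ g (Φ.symm z)).toLinearMap := by
        apply le_antisymm
        · rintro w ⟨v, rfl⟩
          exact ⟨e.symm v, rfl⟩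
        · rintro w ⟨v, rfl⟩
          refine ⟨e v, ?_⟩
          show (fderiv ℝ g (Φ.symm z)) (e.symm (e v)) = _
          rw [e.symm_apply_apply]; rfl
      rw [hre]
      exact hrank _ hx₂.1
    have hT0 : ∀ η : ↥K, T (0, η) = 0 := by
      have hfrT : Module.finrank ℝ (LinearMap.range T.toLinearMap) = Module.finrank ℝ ↥R := by
        rw [hrT, hR]
        exact (hrank a ha).symm
      set pl : (LinearMap.range T.toLinearMap) →ₗ[ℝ] ↥R :=
        (p : F →ₗ[ℝ] ↥R).comp (LinearMap.range T.toLinearMap).subtype with hpl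
      have hsurj : Function.Surjective pl := by
        intro ρ
        refine ⟨⟨T (ρ, 0), LinearMap.mem_range_self _ _⟩, ?_⟩
        show p (T (ρ, 0)) = ρ
        have h := ContinuousLinearMap.ext_iff.mp hfst (ρ, 0)
        simpa using h
      have hinjl : Function.Injective pl :=
        (LinearMap.injective_iff_surjective_of_finrank_eq_finrank hfrT).mpr hsurj
      intro η
      have h1 : p (T (0, η)) = 0 := by
        have h := ContinuousLinearMap.ext_iff.mp hfst (0, η)
        simpa using h
      have h2 : pl ⟨T (0, η), LinearMap.mem_range_self _ _⟩ = pl 0 := by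
        simpa [hpl] using h1
      have h3 := hinjl h2
      have h4 := congrArg Subtype.val h3
      simpa using h4
    have hzero : T.comp (ContinuousLinearMap.inr ℝ ↥R ↥K) = 0 :=
      ContinuousLinearMap.ext fun η => by simpa using hT0 η
    have hcomp : HasFDerivAt (fun t : ↥K => g (Φ.symm (z.1, t)))
        (T.comp (ContinuousLinearMap.inr ℝ ↥R ↥K)) z.2 :=
      by have := HasFDerivAt.comp z.2 hgloc (hasFDerivAt_prodMk_right (𝕜 := ℝ) z.1 z.2); exact this
    rw [hzero] at hcomp
    exact hcomp
  -- g ∘ Φ.symm only depends on the first coordinate on the ball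
  have const : ∀ z1 ∈ Metric.ball (Φ a) ε, ∀ z2 ∈ Metric.ball (Φ a) ε,
      z1.1 = z2.1 → g (Φ.symm z1) = g (Φ.symm z2) := by
    intro z1 h1 z2 h2 h12
    set Q : Set ↥K := {v : ↥K | (z1.1, v) ∈ Metric.ball (Φ a) ε} with hQ
    have hQo : IsOpen Q :=
      Metric.isOpen_ball.preimage (Continuous.prodMk_right z1.1)
    have hQc : Convex ℝ Q := by
      intro v1 hv1 v2 hv2 t1 t2 ht1 ht2 hsum
      have hc := (convex_ball (Φ a) ε) hv1 hv2 ht1 ht2 hsum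
      have heq2 : t1 • ((z1.1 : ↥R), v1) + t2 • ((z1.1 : ↥R), v2)
          = (z1.1, t1 • v1 + t2 • v2) := by
        rw [Prod.smul_mk, Prod.smul_mk, Prod.mk_add_mk, Convex.combo_self hsum]
      rw [heq2] at hc
      exact hc
    have hdiffQ : DifferentiableOn ℝ (fun v : ↥K => g (Φ.symm (z1.1, v))) Q := fun v hv =>
      (vert (z1.1, v) hv).differentiableAt.differentiableWithinAt
    have hzeroQ : ∀ v ∈ Q, fderivWithin ℝ (fun v : ↥K => g (Φ.symm (z1.1, v))) Q v = 0 := by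
      intro v hv
      rw [fderivWithin_of_isOpen hQo hv]
      exact (vert (z1.1, v) hv).fderiv
    have hv1Q : z1.2 ∈ Q := h1
    have hv2Q : z2.2 ∈ Q := by
      show (z1.1, z2.2) ∈ Metric.ball (Φ a) ε
      rw [h12]
      exact h2
    have hcst := hQc.is_const_of_fderivWithin_eq_zero hdiffQ hzeroQ hv1Q hv2Q
    have hz2 : z2 = ((z1.1 : ↥R), z2.2) := by rw [h12]
    rw [hz2]
    exact hcst
  -- assemble the data
  set W : Set E := Φ.source ∩ Φ ⁻¹' (Metric.ball (Φ a) ε) with hWdef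
  have hWo : IsOpen W := Φ.continuousOn.isOpen_inter_preimage Φ.open_source Metric.isOpen_ball
  have haW : a ∈ W := ⟨haΦ, Metric.mem_ball_self hε⟩
  have hWs₂ : ∀ x ∈ W, x ∈ s₂ := by
    intro x hx
    have h1 : Φ x ∈ s₁ := hball hx.2
    have h2 := h1.2.1
    rwa [Φ.left_inv hx.1] at h2
  have hWs : W ⊆ s := fun x hx => (hWs₂ x hx).1
  have hRr : Module.finrank ℝ ↥R = r := by rw [hR, hL]; exact hrank a ha
  set ℓ : ↥R ≃L[ℝ] (Fin r → ℝ) :=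
    ((Module.finBasisOfFinrankEq ℝ ↥R hRr).equivFun).toContinuousLinearEquiv with hℓ
  set κ : E → (Fin r → ℝ) × ↥K := fun x => (ℓ (p (g x)), q x) with hκ
  set lam : F → (Fin r → ℝ) := fun w => ℓ (p w) with hlam
  refine ⟨W, K, κ, lam, hWo, haW, hWs, ?_, ?_, ?_, fun x => rfl, ?_⟩
  · -- open images
    intro U hU hUW
    have hUsrc : U ⊆ Φ.source := hUW.trans inter_subset_left
    have hαU : IsOpen (α '' U) := by
      have h := Φ.isOpen_image_of_subset_source hU hUsrc
      rwa [hΦcoe] at h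
    have hκα : κ '' U = (fun w : ↥R × ↥K => (ℓ w.1, w.2)) '' (α '' U) := by
      rw [← image_comp]; rfl
    rw [hκα]
    have hhom : IsOpenMap (fun w : ↥R × ↥K => (ℓ w.1, w.2)) :=
      (ℓ.toHomeomorph.prodCongr (Homeomorph.refl ↥K)).isOpenMap
    exact hhom _ hαU
  · -- continuity
    have hgc : ContinuousOn g W := hg.continuousOn.mono hWs
    exact ((ℓ.continuous.comp p.continuous).comp_continuousOn hgc).prodMk
      q.continuous.continuousOn
  · -- injectivity of κ on W
    intro x1 h1 x2 h2 h12
    have hα12 : α x1 = α x2 := by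
      have hfsteq : ℓ (p (g x1)) = ℓ (p (g x2)) := congrArg Prod.fst h12
      have hpp : p (g x1) = p (g x2) := ℓ.injective hfsteq
      have hsnd : q x1 = q x2 := congrArg Prod.snd h12
      exact Prod.ext hpp hsnd
    have hΦ12 : Φ x1 = Φ x2 := by rw [hΦcoe]; exact hα12
    exact Φ.injOn h1.1 h2.1 hΦ12
  · -- injectivity of lam on g '' W
    rintro w1 ⟨x1, h1, rfl⟩ w2 ⟨x2, h2, rfl⟩ h12
    have hps : p (g x1) = p (g x2) := ℓ.injective h12
    have hfst1 : (Φ x1).1 = p (g x1) := by rw [hΦcoe]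
    have hfst2 : (Φ x2).1 = p (g x2) := by rw [hΦcoe]
    have hcc := const (Φ x1) h1.2 (Φ x2) h2.2 (by rw [hfst1, hfst2, hps])
    rwa [Φ.left_inv h1.1, Φ.left_inv h2.1] at hcc

lemma normal_form {X Y : Type*}
    [TopologicalSpace X] [ChartedSpace (EuclideanSpace ℝ (Fin n)) X]
    [IsManifold (𝓡 n) ((⊤ : ℕ∞) : WithTop ℕ∞) X]
    [TopologicalSpace Y] [ChartedSpace (EuclideanSpace ℝ (Fin m)) Y]
    [IsManifold (𝓡 m) ((⊤ : ℕ∞) : WithTop ℕ∞) Y]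
    (f : X → Y) (hf : ContMDiff (𝓡 n) (𝓡 m) (⊤ : ℕ∞) f)
    (hrank : ∀ x : X,
      Module.finrank ℝ (LinearMap.range (mfderiv (𝓡 n) (𝓡 m) f x).toLinearMap) = r)
    (c : X) :
    ∃ (W : Set X) (K : Submodule ℝ (EuclideanSpace ℝ (Fin n)))
      (κ : X → (Fin r → ℝ) × K) (lam : Y → (Fin r → ℝ)),
      IsOpen W ∧ c ∈ W ∧ (∀ U, IsOpen U → U ⊆ W → IsOpen (κ '' U)) ∧
      ContinuousOn κ W ∧ Set.InjOn κ W ∧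
      (∀ x ∈ W, lam (f x) = (κ x).1) ∧ Set.InjOn lam (f '' W) := by
  set φ := extChartAt (𝓡 n) c with hφ
  set ψ := extChartAt (𝓡 m) (f c) with hψ
  set F₀ : EuclideanSpace ℝ (Fin n) → EuclideanSpace ℝ (Fin m) := ψ ∘ f ∘ φ.symm with hF₀
  set s₀ : Set (EuclideanSpace ℝ (Fin n)) := φ.target ∩ φ.symm ⁻¹' (f ⁻¹' ψ.source) with hs₀
  have hs₀o : IsOpen s₀ :=
    (continuousOn_extChartAt_symm c).isOpen_inter_preimage (isOpen_extChartAt_target c)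
      (hf.continuous.isOpen_preimage _ (isOpen_extChartAt_source (f c)))
  have ha₀ : φ c ∈ s₀ := by
    refine ⟨PartialEquiv.map_source _ (mem_extChartAt_source c), ?_⟩
    show φ.symm (φ c) ∈ f ⁻¹' ψ.source
    rw [PartialEquiv.left_inv _ (mem_extChartAt_source c)]
    exact mem_extChartAt_source (f c)
  have hF₀smooth : ContDiffOn ℝ ((⊤ : ℕ∞) : WithTop ℕ∞) F₀ s₀ :=
    (contMDiff_iff.mp hf).2 c (f c)
  -- rank of the chart representative
  have hrk : ∀ u ∈ s₀, Module.finrank ℝ (LinearMap.range (fderiv ℝ F₀ u).toLinearMap) = r := by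
    intro u hu
    set x := φ.symm u with hx
    have hxsrc : x ∈ φ.source := PartialEquiv.map_target _ hu.1
    have hfx : f x ∈ ψ.source := hu.2
    have hφxu : φ x = u := PartialEquiv.right_inv _ hu.1
    have hφsymm : MDifferentiableAt 𝓘(ℝ, EuclideanSpace ℝ (Fin n)) (𝓡 n) φ.symm u :=
      ((contMDiffOn_extChartAt_symm c).mdifferentiableOn (by simp : ((⊤ : ℕ∞) : WithTop ℕ∞) ≠ 0)).mdifferentiableAt
        ((isOpen_extChartAt_target c).mem_nhds hu.1)
    have hfd : MDifferentiableAt (𝓡 n) (𝓡 m) f x := hf.mdifferentiableAt (by simp : ((⊤ : ℕ∞) : WithTop ℕ∞) ≠ 0)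
    have hψd : MDifferentiableAt (𝓡 m) 𝓘(ℝ, EuclideanSpace ℝ (Fin m)) ψ (f x) :=
      (contMDiffAt_extChartAt' (by rwa [← extChartAt_source (𝓡 m)])).mdifferentiableAt (by simp : ((⊤ : ℕ∞) : WithTop ℕ∞) ≠ 0)
    have hψsymm : MDifferentiableAt 𝓘(ℝ, EuclideanSpace ℝ (Fin m)) (𝓡 m) ψ.symm (ψ (f x)) :=
      ((contMDiffOn_extChartAt_symm (f c)).mdifferentiableOn (by simp : ((⊤ : ℕ∞) : WithTop ℕ∞) ≠ 0)).mdifferentiableAt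
        ((isOpen_extChartAt_target (f c)).mem_nhds (PartialEquiv.map_source _ hfx))
    have hφd : MDifferentiableAt (𝓡 n) 𝓘(ℝ, EuclideanSpace ℝ (Fin n)) φ x :=
      mdifferentiableAt_extChartAt (by rwa [← extChartAt_source (𝓡 n)])
    have hcomp1 : MDifferentiableAt 𝓘(ℝ, EuclideanSpace ℝ (Fin n)) (𝓡 m)
        (f ∘ φ.symm) u := hfd.comp u hφsymm
    -- chain rule
    have hchain : mfderiv 𝓘(ℝ, EuclideanSpace ℝ (Fin n)) 𝓘(ℝ, EuclideanSpace ℝ (Fin m)) F₀ u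
        = ((mfderiv (𝓡 m) 𝓘(ℝ, EuclideanSpace ℝ (Fin m)) ψ (f x)).comp
          (mfderiv (𝓡 n) (𝓡 m) f x)).comp
          (mfderiv 𝓘(ℝ, EuclideanSpace ℝ (Fin n)) (𝓡 n) φ.symm u) := by
      have h1 : mfderiv 𝓘(ℝ, EuclideanSpace ℝ (Fin n)) 𝓘(ℝ, EuclideanSpace ℝ (Fin m))
          (ψ ∘ (f ∘ φ.symm)) u
          = (mfderiv (𝓡 m) 𝓘(ℝ, EuclideanSpace ℝ (Fin m)) ψ ((f ∘ φ.symm) u)).comp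
            (mfderiv 𝓘(ℝ, EuclideanSpace ℝ (Fin n)) (𝓡 m) (f ∘ φ.symm) u) :=
        mfderiv_comp u (by exact hψd) hcomp1
      have h2 : mfderiv 𝓘(ℝ, EuclideanSpace ℝ (Fin n)) (𝓡 m) (f ∘ φ.symm) u
          = (mfderiv (𝓡 n) (𝓡 m) f x).comp
            (mfderiv 𝓘(ℝ, EuclideanSpace ℝ (Fin n)) (𝓡 n) φ.symm u) :=
        mfderiv_comp u hfd hφsymm
      rw [hF₀, h1, h2, ContinuousLinearMap.comp_assoc]
      rfl
    -- the chart derivatives are invertible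
    have hid2 : (mfderiv 𝓘(ℝ, EuclideanSpace ℝ (Fin n)) (𝓡 n) φ.symm u).comp
        (mfderiv (𝓡 n) 𝓘(ℝ, EuclideanSpace ℝ (Fin n)) φ x)
        = ContinuousLinearMap.id ℝ (EuclideanSpace ℝ (Fin n)) := by
      have hev : φ.symm ∘ φ =ᶠ[nhds x] id := by
        filter_upwards [(isOpen_extChartAt_source c).mem_nhds hxsrc] with w hw
        exact PartialEquiv.left_inv _ hw
      have h3 : mfderiv (𝓡 n) (𝓡 n) (φ.symm ∘ φ) x
          = (mfderiv 𝓘(ℝ, EuclideanSpace ℝ (Fin n)) (𝓡 n) φ.symm (φ x)).comp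
            (mfderiv (𝓡 n) 𝓘(ℝ, EuclideanSpace ℝ (Fin n)) φ x) :=
        mfderiv_comp x (by rwa [hφxu]) hφd
      rw [hφxu] at h3
      rw [← h3, hev.mfderiv_eq, mfderiv_id]
      rfl
    have hid3 : (mfderiv 𝓘(ℝ, EuclideanSpace ℝ (Fin m)) (𝓡 m) ψ.symm (ψ (f x))).comp
        (mfderiv (𝓡 m) 𝓘(ℝ, EuclideanSpace ℝ (Fin m)) ψ (f x))
        = ContinuousLinearMap.id ℝ (EuclideanSpace ℝ (Fin m)) := by
      have hev : ψ.symm ∘ ψ =ᶠ[nhds (f x)] id := by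
        filter_upwards [(isOpen_extChartAt_source (f c)).mem_nhds hfx] with w hw
        exact PartialEquiv.left_inv _ hw
      have h3 : mfderiv (𝓡 m) (𝓡 m) (ψ.symm ∘ ψ) (f x)
          = (mfderiv 𝓘(ℝ, EuclideanSpace ℝ (Fin m)) (𝓡 m) ψ.symm (ψ (f x))).comp
            (mfderiv (𝓡 m) 𝓘(ℝ, EuclideanSpace ℝ (Fin m)) ψ (f x)) :=
        mfderiv_comp (f x) hψsymm hψd
      rw [← h3, hev.mfderiv_eq, mfderiv_id]
      rfl
    have hsurjφ : Function.Surjective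
        ⇑(mfderiv 𝓘(ℝ, EuclideanSpace ℝ (Fin n)) (𝓡 n) φ.symm u) := by
      intro v
      have h2 : ((mfderiv 𝓘(ℝ, EuclideanSpace ℝ (Fin n)) (𝓡 n) φ.symm u).comp
          (mfderiv (𝓡 n) 𝓘(ℝ, EuclideanSpace ℝ (Fin n)) φ x)) v = v := by
        rw [hid2]; rfl
      change (mfderiv 𝓘(ℝ, EuclideanSpace ℝ (Fin n)) (𝓡 n) φ.symm u) ((mfderiv (𝓡 n) 𝓘(ℝ, EuclideanSpace ℝ (Fin n)) φ x) v) = v at h2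
      exact ⟨_, h2⟩
    have hinjψ : Function.Injective
        ⇑(mfderiv (𝓡 m) 𝓘(ℝ, EuclideanSpace ℝ (Fin m)) ψ (f x)) := by
      intro v w hvw
      have h1 := congrArg (⇑(mfderiv 𝓘(ℝ, EuclideanSpace ℝ (Fin m)) (𝓡 m) ψ.symm (ψ (f x)))) hvw
      have h2 : ((mfderiv 𝓘(ℝ, EuclideanSpace ℝ (Fin m)) (𝓡 m) ψ.symm (ψ (f x))).comp
          (mfderiv (𝓡 m) 𝓘(ℝ, EuclideanSpace ℝ (Fin m)) ψ (f x))) v = v := by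
        rw [hid3]; rfl
      have h3 : ((mfderiv 𝓘(ℝ, EuclideanSpace ℝ (Fin m)) (𝓡 m) ψ.symm (ψ (f x))).comp
          (mfderiv (𝓡 m) 𝓘(ℝ, EuclideanSpace ℝ (Fin m)) ψ (f x))) w = w := by
        rw [hid3]; rfl
      rw [ContinuousLinearMap.comp_apply] at h2 h3
      rw [← h2, ← h3, h1]
    -- compute the rank
    have hfd₀ : fderiv ℝ F₀ u
        = mfderiv 𝓘(ℝ, EuclideanSpace ℝ (Fin n)) 𝓘(ℝ, EuclideanSpace ℝ (Fin m)) F₀ u :=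
      mfderiv_eq_fderiv.symm
    rw [hfd₀, hchain]
    have hr1 : LinearMap.range ((((mfderiv (𝓡 m) 𝓘(ℝ, EuclideanSpace ℝ (Fin m)) ψ (f x)).comp
          (mfderiv (𝓡 n) (𝓡 m) f x)).comp
          (mfderiv 𝓘(ℝ, EuclideanSpace ℝ (Fin n)) (𝓡 n) φ.symm u)).toLinearMap)
        = Submodule.map (mfderiv (𝓡 m) 𝓘(ℝ, EuclideanSpace ℝ (Fin m)) ψ (f x)).toLinearMap
          (LinearMap.range (mfderiv (𝓡 n) (𝓡 m) f x).toLinearMap) := by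
      ext w
      simp only [LinearMap.mem_range, Submodule.mem_map, ContinuousLinearMap.comp_apply,
        ContinuousLinearMap.coe_coe]
      constructor
      · rintro ⟨v, rfl⟩
        exact ⟨mfderiv (𝓡 n) (𝓡 m) f x
          ((mfderiv 𝓘(ℝ, EuclideanSpace ℝ (Fin n)) (𝓡 n) φ.symm u) v), ⟨_, rfl⟩, rfl⟩
      · rintro ⟨w', ⟨v, rfl⟩, rfl⟩
        obtain ⟨t, ht⟩ := hsurjφ v
        exact ⟨t, by rw [ht]⟩
    refine (congrArg (fun S : Submodule ℝ (TangentSpace (𝓡 m) (ψ (f x))) => Module.finrank ℝ ↥S) hr1).trans ?_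
    have hfin := LinearEquiv.finrank_eq (Submodule.equivMapOfInjective
      (mfderiv (𝓡 m) 𝓘(ℝ, EuclideanSpace ℝ (Fin m)) ψ (f x)).toLinearMap
      (by exact hinjψ) (LinearMap.range (mfderiv (𝓡 n) (𝓡 m) f x).toLinearMap))
    exact hfin.symm.trans (hrank x)
  -- apply the euclidean normal form
  obtain ⟨Wg, K, κE, lamE, hWgo, haWg, hWgs, h1E, h2E, h3E, h4E, h5E⟩ :=
    euclidean_normal_form F₀ s₀ hs₀o hF₀smooth hrk (φ c) ha₀
  set W : Set X := φ.source ∩ φ ⁻¹' Wg with hW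
  have hWo : IsOpen W :=
    (continuousOn_extChartAt c).isOpen_inter_preimage (isOpen_extChartAt_source c) hWgo
  have hcW : c ∈ W := ⟨mem_extChartAt_source c, haWg⟩
  have hmem : ∀ x ∈ W, f x ∈ ψ.source ∧ ψ (f x) = F₀ (φ x) := by
    intro x hx
    have h1 : φ x ∈ s₀ := hWgs hx.2
    have h2 : φ.symm (φ x) = x := PartialEquiv.left_inv _ hx.1
    constructor
    · have := h1.2
      rwa [mem_preimage, h2] at this
    · show ψ (f x) = ψ (f (φ.symm (φ x)))
      rw [h2]
  refine ⟨W, K, κE ∘ φ, lamE ∘ ψ, hWo, hcW, ?_, ?_, ?_, ?_, ?_⟩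
  · -- open images
    intro U hU hUW
    have hUsrc : U ⊆ φ.source := hUW.trans inter_subset_left
    have himg : (κE ∘ φ) '' U = κE '' (φ '' U) := image_comp _ _ _
    rw [himg]
    have hφU : IsOpen (φ '' U) := by
      rw [PartialEquiv.image_eq_target_inter_inv_preimage _ hUsrc]
      exact (continuousOn_extChartAt_symm c).isOpen_inter_preimage
        (isOpen_extChartAt_target c) hU
    have hφUW : φ '' U ⊆ Wg := by
      rintro w ⟨z, hzU, rfl⟩
      exact (hUW hzU).2
    exact h1E _ hφU hφUW
  · -- continuity
    refine h2E.comp ((continuousOn_extChartAt c).mono inter_subset_left) ?_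
    intro x hx
    exact hx.2
  · -- injectivity of κ
    intro x1 h1 x2 h2 h12
    have hκ12 : κE (φ x1) = κE (φ x2) := h12
    have := h3E h1.2 h2.2 hκ12
    exact (extChartAt (𝓡 n) c).injOn h1.1 h2.1 this
  · -- compatibility
    intro x hx
    obtain ⟨hfx, hpsi⟩ := hmem x hx
    show lamE (ψ (f x)) = (κE (φ x)).1
    rw [hpsi]
    exact h4E (φ x)
  · -- injectivity of lam
    rintro w1 ⟨x1, h1, rfl⟩ w2 ⟨x2, h2, rfl⟩ h12
    obtain ⟨hfx1, hpsi1⟩ := hmem x1 h1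
    obtain ⟨hfx2, hpsi2⟩ := hmem x2 h2
    have hψ12 : ψ (f x1) = ψ (f x2) := by
      apply h5E
      · rw [hpsi1]; exact mem_image_of_mem _ h1.2
      · rw [hpsi2]; exact mem_image_of_mem _ h2.2
      · show lamE (ψ (f x1)) = lamE (ψ (f x2))
        exact h12
    exact (extChartAt (𝓡 m) (f c)).injOn hfx1 hfx2 hψ12

/-- Topological transfer lemma: from normal-form chart data on `W`, images of small open
sets near one fiber point can be replicated near any other fiber point in `W`. -/
lemma rel_transfer {X Y Z₁ Z₂ : Type*} [TopologicalSpace X] [TopologicalSpace Y]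
    [TopologicalSpace Z₁] [TopologicalSpace Z₂]
    (f : X → Y) (y : Y) (W : Set X) (κ : X → Z₁ × Z₂) (lam : Y → Z₁)
    (h1 : ∀ U, IsOpen U → U ⊆ W → IsOpen (κ '' U))
    (h2 : ContinuousOn κ W) (h3 : Set.InjOn κ W)
    (h4 : ∀ x ∈ W, lam (f x) = (κ x).1) (h5 : Set.InjOn lam (f '' W))
    (hWo : IsOpen W)
    (x : X) (hx : x ∈ W) (hxy : f x = y) (O : Set X) (hO : IsOpen O) (hxO : x ∈ O) :
    ∃ N, IsOpen N ∧ N ⊆ W ∧ (W ∩ f ⁻¹' {y}) ⊆ N ∧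
      ∀ U, IsOpen U → U ⊆ N → y ∈ f '' U →
        ∃ U', IsOpen U' ∧ x ∈ U' ∧ U' ⊆ O ∧ f '' U' = f '' U := by
  -- product neighborhood inside κ '' (O ∩ W)
  have hOW : IsOpen (κ '' (O ∩ W)) := h1 _ (hO.inter hWo) inter_subset_right
  have hκx : κ x ∈ κ '' (O ∩ W) := mem_image_of_mem _ ⟨hxO, hx⟩
  obtain ⟨P, Q, hP, hQ, hxP, hxQ, hPQ⟩ := isOpen_prod_iff.mp hOW (κ x).1 (κ x).2 hκx
  refine ⟨W ∩ κ ⁻¹' (P ×ˢ univ), h2.isOpen_inter_preimage hWo (hP.prod isOpen_univ),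
    inter_subset_left, ?_, ?_⟩
  · rintro z ⟨hzW, hzy⟩
    have : (κ z).1 = (κ x).1 := by
      rw [← h4 z hzW, ← h4 x hx, hzy.out, hxy]
    exact ⟨hzW, by simp [Set.mem_prod, this, hxP]⟩
  · intro U hU hUN hyU
    set A : Set Z₁ := Prod.fst '' (κ '' U) with hA
    have hAopen : IsOpen A := isOpenMap_fst _ (h1 _ hU (hUN.trans inter_subset_left))
    have hAP : A ⊆ P := by
      rintro u ⟨z', ⟨z, hzU, rfl⟩, rfl⟩
      exact (hUN hzU).2.1
    have hUW : U ⊆ W := hUN.trans inter_subset_left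
    have hu₀ : (κ x).1 ∈ A := by
      obtain ⟨z, hzU, hzy⟩ := hyU
      have : (κ z).1 = (κ x).1 := by rw [← h4 z (hUW hzU), ← h4 x hx, hzy, hxy]
      exact ⟨κ z, mem_image_of_mem _ hzU, this⟩
    refine ⟨W ∩ κ ⁻¹' (A ×ˢ Q), h2.isOpen_inter_preimage hWo (hAopen.prod hQ),
      ⟨hx, by exact ⟨hu₀, hxQ⟩⟩, ?_, ?_⟩
    · rintro z ⟨hzW, hzAQ⟩
      have : κ z ∈ P ×ˢ Q := ⟨hAP hzAQ.1, hzAQ.2⟩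
      obtain ⟨w, hwOW, hwz⟩ := hPQ this
      rw [← h3 hwOW.2 hzW hwz]; exact hwOW.1
    · apply Subset.antisymm
      · rintro w ⟨z', ⟨hz'W, hz'AQ⟩, rfl⟩
        obtain ⟨p, ⟨zz, hzzU, rfl⟩, hfst⟩ := hz'AQ.1
        have : lam (f zz) = lam (f z') := by rw [h4 zz (hUW hzzU), h4 z' hz'W, hfst]
        have := h5 (mem_image_of_mem f (hUW hzzU)) (mem_image_of_mem f hz'W) this
        exact this ▸ mem_image_of_mem f hzzU
      · rintro w ⟨z, hzU, rfl⟩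
        have huA : (κ z).1 ∈ A := ⟨κ z, mem_image_of_mem _ hzU, rfl⟩
        have : ((κ z).1, (κ x).2) ∈ P ×ˢ Q := ⟨hAP huA, hxQ⟩
        obtain ⟨w', hw'OW, hw'⟩ := hPQ this
        have hw'U' : w' ∈ W ∩ κ ⁻¹' (A ×ˢ Q) := by
          refine ⟨hw'OW.2, ?_⟩
          simp only [mem_preimage, hw'] at *
          exact ⟨huA, hxQ⟩
        have : lam (f w') = lam (f z) := by
          rw [h4 w' hw'OW.2, h4 z (hUW hzU), hw']
        have := h5 (mem_image_of_mem f hw'OW.2) (mem_image_of_mem f (hUW hzU)) this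
        exact this ▸ mem_image_of_mem f hw'U'

end ConstantRank

section Glue
open Set

/-- Step 2 of the embedded-image lemma: on a connected fiber `f⁻¹(y)` of a smooth
constant-rank map, the relation "x ∼ x′ iff every pair of neighborhoods contains
sub-neighborhoods with equal images under f" is an equivalence relation with open
classes, hence has exactly one class. -/
theorem fiber_equivalence_one_class
    {n m : ℕ} {X Y : Type*}
    [TopologicalSpace X] [ChartedSpace (EuclideanSpace ℝ (Fin n)) X]
    [IsManifold (𝓡 n) ((⊤ : ℕ∞) : WithTop ℕ∞) X]
    [TopologicalSpace Y] [ChartedSpace (EuclideanSpace ℝ (Fin m)) Y]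
    [IsManifold (𝓡 m) ((⊤ : ℕ∞) : WithTop ℕ∞) Y]
    (f : X → Y) (hf : ContMDiff (𝓡 n) (𝓡 m) (⊤ : ℕ∞) f)
    (r : ℕ)
    (hrank : ∀ x : X,
      Module.finrank ℝ (LinearMap.range (mfderiv (𝓡 n) (𝓡 m) f x).toLinearMap) = r)
    (y : Y) (hy : y ∈ Set.range f) (hconn : IsConnected (f ⁻¹' {y}))
    (rel : (f ⁻¹' {y}) → (f ⁻¹' {y}) → Prop)
    (hrel : ∀ a b : (f ⁻¹' {y}), rel a b ↔
      ∀ Oa Ob : Set X, IsOpen Oa → IsOpen Ob → (a : X) ∈ Oa → (b : X) ∈ Ob →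
        ∃ Ua Ub : Set X, IsOpen Ua ∧ IsOpen Ub ∧ (a : X) ∈ Ua ∧ (b : X) ∈ Ub ∧
          Ua ⊆ Oa ∧ Ub ⊆ Ob ∧ f '' Ua = f '' Ub) :
    Equivalence rel ∧ (∀ a, IsOpen {b | rel a b}) ∧ ∀ a b, rel a b := by
  -- reflexivity
  have hrefl : ∀ a, rel a a := by
    intro a
    rw [hrel]
    intro Oa Ob hOa hOb ha hb
    exact ⟨Oa ∩ Ob, Oa ∩ Ob, hOa.inter hOb, hOa.inter hOb, ⟨ha, hb⟩, ⟨ha, hb⟩,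
      inter_subset_left, inter_subset_right, rfl⟩
  -- totality
  have htot : ∀ a b, rel a b := by
    intro a b
    haveI : ConnectedSpace (f ⁻¹' {y}) := Subtype.connectedSpace hconn
    set S : Set (f ⁻¹' {y}) := {b | rel a b} with hS
    -- openness
    have hopen : IsOpen S := by
      rw [isOpen_iff_forall_mem_open]
      intro b₀ hb₀
      obtain ⟨W, K, κ, lam, hWo, hcW, h1, h2, h3, h4, h5⟩ :=
        normal_form f hf hrank (b₀ : X)
      refine ⟨Subtype.val ⁻¹' W, ?_, (continuous_subtype_val.isOpen_preimage _ hWo), hcW⟩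
      intro b' hb'W
      show rel a b'
      rw [hrel]
      intro Oa Ob' hOa hOb' haOa hb'Ob'
      obtain ⟨N, hNo, hNW, hfibN, htrans⟩ := rel_transfer f y W κ lam h1 h2 h3 h4 h5 hWo
        (b' : X) hb'W b'.2 Ob' hOb' hb'Ob'
      have hbN : (b₀ : X) ∈ N := hfibN ⟨hcW, b₀.2⟩
      obtain ⟨Ua, U, hUao, hUo, haUa, hbU, hUaOa, hUN, himg⟩ :=
        (hrel a b₀).mp hb₀ Oa N hOa hNo haOa hbN
      have hyU : y ∈ f '' U := ⟨b₀, hbU, b₀.2⟩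
      obtain ⟨U', hU'o, hb'U', hU'Ob', himg'⟩ := htrans U hUo hUN hyU
      exact ⟨Ua, U', hUao, hU'o, haUa, hb'U', hUaOa, hU'Ob', himg.trans himg'.symm⟩
    -- closedness
    have hclosed : IsClosed S := by
      rw [← isOpen_compl_iff, isOpen_iff_forall_mem_open]
      intro b₀ hb₀
      obtain ⟨W, K, κ, lam, hWo, hcW, h1, h2, h3, h4, h5⟩ :=
        normal_form f hf hrank (b₀ : X)
      refine ⟨Subtype.val ⁻¹' W, ?_, (continuous_subtype_val.isOpen_preimage _ hWo), hcW⟩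
      intro b' hb'W hb'S
      apply hb₀
      show rel a b₀
      rw [hrel]
      intro Oa Ob hOa hOb haOa hbOb
      obtain ⟨N, hNo, hNW, hfibN, htrans⟩ := rel_transfer f y W κ lam h1 h2 h3 h4 h5 hWo
        (b₀ : X) hcW b₀.2 Ob hOb hbOb
      have hb'N : (b' : X) ∈ N := hfibN ⟨hb'W, b'.2⟩
      obtain ⟨Ua, U, hUao, hUo, haUa, hbU, hUaOa, hUN, himg⟩ :=
        (hrel a b').mp hb'S Oa N hOa hNo haOa hb'N
      have hyU : y ∈ f '' U := ⟨b', hbU, b'.2⟩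
      obtain ⟨U', hU'o, hbU', hU'Ob, himg'⟩ := htrans U hUo hUN hyU
      exact ⟨Ua, U', hUao, hU'o, haUa, hbU', hUaOa, hU'Ob, himg.trans himg'.symm⟩
    have : S = univ := IsClopen.eq_univ ⟨hclosed, hopen⟩ ⟨a, hrefl a⟩
    have := this ▸ (mem_univ b)
    exact this
  exact ⟨⟨fun a => htot a a, fun {a b} _ => htot b a, fun {a b c} _ _ => htot a c⟩,
    fun a => by
      have : {b | rel a b} = (univ : Set (f ⁻¹' {y})) := Set.eq_univ_iff_forall.mpr (htot a)
      rw [this]; exact isOpen_univ,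
    htot⟩

end Glue
end

section
/- Let ε ∈ (0, π/4), and let u, z ∈ ℝ³ with z ≠ u, β ∈ S², φ₀ ∈ (ε, π/2 − ε), satisfying (z−u)·β = |z−u| cos φ₀. Then the three quantities d_zφ = β − ((z−u)/|z−u|) cos φ₀, d_{φ₀}φ = |z−u| sin φ₀, and the pair ((z−u)·β₁, (z−u)·β₂) (for any orthonormal completion β₁, β₂ of β) satisfy: d_zφ ≠ 0 and d_{φ₀}φ ≠ 0. In particular the conormal bundle of the incidence set {φ = 0} contains no covectors vanishing in either the z-variables or the (u,β,φ₀)-variables. -/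
open Real RealInnerProductSpace

noncomputable abbrev V3 := EuclideanSpace ℝ (Fin 3)

/-- On the incidence set {φ = 0} of the cone transform with opening angles in
(ε, π/2−ε), both d_zφ = β − cos φ₀ (z−u)/|z−u| and d_{φ₀}φ = |z−u| sin φ₀ are
nonzero, so the conormal bundle of {φ = 0} contains no covectors vanishing in
either the z-variables or the (u,β,φ₀)-variables. -/
theorem cone_lagrangian_avoids_zero_sections (u z β : V3) (hz : z ≠ u)
    (hβ : ‖β‖ = 1) (ε : ℝ) (hε : 0 < ε) (hε' : ε < π / 4)
    (φ₀ : ℝ) (hφ : φ₀ ∈ Set.Ioo ε (π / 2 - ε))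
    (hcone : ⟪z - u, β⟫ = ‖z - u‖ * Real.cos φ₀) :
    β - (Real.cos φ₀ / ‖z - u‖) • (z - u) ≠ 0 ∧
    ‖z - u‖ * Real.sin φ₀ ≠ 0 := by
  have hzu : z - u ≠ 0 := sub_ne_zero.mpr hz
  have hn : 0 < ‖z - u‖ := norm_pos_iff.mpr hzu
  have hpi : 0 < π := Real.pi_pos
  have h0 : 0 < φ₀ := lt_trans hε hφ.1
  have h2 : φ₀ < π / 2 := lt_of_lt_of_le hφ.2 (by linarith)
  have hsin : 0 < Real.sin φ₀ := Real.sin_pos_of_pos_of_lt_pi h0 (by linarith)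
  have hcos1 : Real.cos φ₀ < 1 := by
    calc Real.cos φ₀ < Real.cos 0 := by
          apply Real.cos_lt_cos_of_nonneg_of_le_pi le_rfl (by linarith) h0
      _ = 1 := Real.cos_zero
  have hcos0 : 0 < Real.cos φ₀ := Real.cos_pos_of_mem_Ioo ⟨by linarith, h2⟩
  refine ⟨?_, ?_⟩
  · intro h
    have hβe : β = (Real.cos φ₀ / ‖z - u‖) • (z - u) := by
      have := sub_eq_zero.mp h; exact this
    have : ‖β‖ = Real.cos φ₀ := by
      rw [hβe, norm_smul, Real.norm_eq_abs, abs_of_pos (div_pos hcos0 hn)]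
      field_simp
    rw [hβ] at this
    linarith
  · positivity
end
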